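/- Let c, d ∈ ℤ and let q be a positive integer. If 4 ∣ q and E(c,d;q) ≠ 0, then 2 ∣ c. If 9 ∣ q and E(c,d;q) ≠ 0, then 3 ∣ d. -/

import Mathlib

open scoped BigOperators

/-- `E(c,d;q) = Σ_{z mod q, gcd(z,q)=1} e((cz³ − dz²)/q)`, where `e(x) = exp(2πix)`. -/
noncomputable def expE (c d : ℤ) (q : ℕ) : ℂ :=
  ∑ z ∈ (Finset.range q).filter fun z => Nat.gcd z q = 1,
    Complex.exp (2 * Real.pi * Complex.I *
      (((c : ℂ) * (z : ℂ) ^ 3 - (d : ℂ) * (z : ℂ) ^ 2) / (q : ℂ)))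

noncomputable def e2 (x : ℂ) : ℂ := Complex.exp (2 * Real.pi * Complex.I * x)

lemma e2_add (x y : ℂ) : e2 (x + y) = e2 x * e2 y := by
  rw [e2, e2, e2, ← Complex.exp_add, mul_add]

lemma e2_int (m : ℤ) : e2 (m : ℂ) = 1 := by
  rw [e2, show (2 * (Real.pi : ℂ) * Complex.I * m) = m * (2 * Real.pi * Complex.I) by ring,
    Complex.exp_int_mul_two_pi_mul_I]

lemma e2_half (k : ℤ) : e2 ((k : ℂ) / 2) = (-1) ^ k := by
  rw [e2, show (2 * (Real.pi : ℂ) * Complex.I * ((k : ℂ) / 2)) = k * (Real.pi * Complex.I) by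
    ring, Complex.exp_int_mul, Complex.exp_pi_mul_I]

noncomputable def om : ℂ := Complex.exp (2 * Real.pi * Complex.I / 3)

lemma om_prim : IsPrimitiveRoot om 3 := by
  have h := Complex.isPrimitiveRoot_exp 3 (by norm_num)
  have : ((3 : ℕ) : ℂ) = 3 := by norm_num
  rwa [this] at h

lemma e2_third (k : ℤ) : e2 ((k : ℂ) / 3) = om ^ k := by
  rw [e2, om, show (2 * (Real.pi : ℂ) * Complex.I * ((k : ℂ) / 3))
      = k * (2 * Real.pi * Complex.I / 3) by ring, Complex.exp_int_mul]

lemma cube_sum (ζ : ℂ) (h3 : ζ ^ 3 = 1) (h1 : ζ ≠ 1) : 1 + ζ + ζ ^ 2 = 0 := by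
  have h : (ζ - 1) * (1 + ζ + ζ ^ 2) = 0 := by linear_combination h3
  rcases mul_eq_zero.mp h with h | h
  · exact absurd (sub_eq_zero.mp h) h1
  · exact h

lemma coprime_shift (q t z : ℕ) (H : ∀ p, p.Prime → p ∣ q → p ∣ t) :
    Nat.gcd (z + t) q = 1 ↔ Nat.gcd z q = 1 := by
  constructor
  · intro h
    by_contra hc
    obtain ⟨p, pp, hpz, hpq⟩ := Nat.Prime.not_coprime_iff_dvd.mp hc
    have hpt := H p pp hpq
    have h1 : p ∣ Nat.gcd (z + t) q := Nat.dvd_gcd (Dvd.dvd.add hpz hpt) hpq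
    rw [h] at h1
    exact pp.ne_one (Nat.dvd_one.mp h1)
  · intro h
    by_contra hc
    obtain ⟨p, pp, hpz, hpq⟩ := Nat.Prime.not_coprime_iff_dvd.mp hc
    have hpt := H p pp hpq
    have hpz' : p ∣ z := by
      have := Nat.dvd_sub hpz hpt
      simpa using this
    have h1 : p ∣ Nat.gcd z q := Nat.dvd_gcd hpz' hpq
    rw [h] at h1
    exact pp.ne_one (Nat.dvd_one.mp h1)

noncomputable def Fz (c d : ℤ) (q : ℕ) (z : ℕ) : ℂ :=
  e2 (((c : ℂ) * (z : ℂ) ^ 3 - (d : ℂ) * (z : ℂ) ^ 2) / (q : ℂ))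

lemma expE_eq (c d : ℤ) (q : ℕ) :
    expE c d q = ∑ z ∈ (Finset.range q).filter (fun z => Nat.gcd z q = 1), Fz c d q z := rfl

lemma Fz_add (c d : ℤ) (q : ℕ) (hq : 0 < q) (z t : ℕ) :
    Fz c d q (z + t) = Fz c d q z *
      e2 (((c : ℂ) * (3 * (z:ℂ)^2 * t + 3 * z * t^2 + (t:ℂ)^3)
        - (d : ℂ) * (2 * z * t + (t:ℂ)^2)) / q) := by
  rw [Fz, Fz, ← e2_add]
  congr 1
  have hq' : (q : ℂ) ≠ 0 := by
    exact_mod_cast Nat.cast_ne_zero.mpr hq.ne'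
  push_cast
  field_simp
  ring

lemma Fz_add_mul (c d : ℤ) (q : ℕ) (hq : 0 < q) (z k : ℕ) :
    Fz c d q (z + q * k) = Fz c d q z := by
  rw [Fz, Fz]
  have hq' : (q : ℂ) ≠ 0 := Nat.cast_ne_zero.mpr hq.ne'
  have hx : ((c : ℂ) * ((z + q * k : ℕ) : ℂ) ^ 3 - (d : ℂ) * ((z + q * k : ℕ) : ℂ) ^ 2) / (q : ℂ)
      = ((c : ℂ) * (z : ℂ) ^ 3 - (d : ℂ) * (z : ℂ) ^ 2) / (q : ℂ)
        + ((c * (3 * (z:ℤ)^2 * k + 3 * z * q * k^2 + (q:ℤ)^2 * k^3)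
            - d * (2 * (z:ℤ) * k + (q:ℤ) * k^2) : ℤ) : ℂ) := by
    push_cast
    field_simp
    ring
  rw [hx, e2_add, e2_int, mul_one]

lemma Fz_mod (c d : ℤ) (q : ℕ) (hq : 0 < q) (n : ℕ) :
    Fz c d q (n % q) = Fz c d q n := by
  conv_rhs => rw [show n = n % q + q * (n / q) from (Nat.mod_add_div n q).symm]
  rw [Fz_add_mul c d q hq]

lemma sum_shift (c d : ℤ) (q t : ℕ) (hq : 0 < q) (ht : t < q)
    (H : ∀ p, p.Prime → p ∣ q → p ∣ t) :
    ∑ z ∈ (Finset.range q).filter (fun z => Nat.gcd z q = 1), Fz c d q z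
    = ∑ z ∈ (Finset.range q).filter (fun z => Nat.gcd z q = 1), Fz c d q (z + t) := by
  have hmem : ∀ z, z ∈ (Finset.range q).filter (fun z => Nat.gcd z q = 1)
      ↔ (z < q ∧ Nat.gcd z q = 1) := by
    intro z; simp [Finset.mem_filter, Finset.mem_range]
  have key : ∀ n : ℕ, Nat.gcd (n % q) q = Nat.gcd n q := by
    intro n
    rw [Nat.gcd_comm n q, Nat.gcd_rec q n]
  symm
  refine Finset.sum_nbij' (fun z => (z + t) % q) (fun w => (w + (q - t)) % q) ?_ ?_ ?_ ?_ ?_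
  · intro z hz
    rw [hmem] at hz ⊢
    refine ⟨Nat.mod_lt _ hq, ?_⟩
    rw [key, coprime_shift q t z H]
    exact hz.2
  · intro w hw
    rw [hmem] at hw ⊢
    refine ⟨Nat.mod_lt _ hq, ?_⟩
    have H' : ∀ p, p.Prime → p ∣ q → p ∣ (q - t) := fun p pp hpq =>
      Nat.dvd_sub hpq (H p pp hpq)
    rw [key, coprime_shift q (q - t) w H']
    exact hw.2
  · intro z hz
    rw [hmem] at hz
    show ((z + t) % q + (q - t)) % q = z
    rw [Nat.mod_add_mod, add_assoc, Nat.add_sub_cancel' ht.le, Nat.add_mod_right,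
      Nat.mod_eq_of_lt hz.1]
  · intro w hw
    rw [hmem] at hw
    show ((w + (q - t)) % q + t) % q = w
    rw [Nat.mod_add_mod, add_assoc, Nat.sub_add_cancel ht.le, Nat.add_mod_right,
      Nat.mod_eq_of_lt hw.1]
  · intro z hz
    rw [Fz_mod c d q hq]

theorem stmt11 (c d : ℤ) (q : ℕ) (hq : 0 < q) :
    (4 ∣ q → expE c d q ≠ 0 → 2 ∣ c) ∧ (9 ∣ q → expE c d q ≠ 0 → 3 ∣ d) := by
  constructor
  · rintro ⟨u, rfl⟩ hE
    by_contra hc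
    have hu : 0 < u := by omega
    have hco : Odd c := Int.odd_iff.mpr (by omega)
    have hu' : (u : ℂ) ≠ 0 := Nat.cast_ne_zero.mpr hu.ne'
    have H : ∀ p, p.Prime → p ∣ 4 * u → p ∣ 2 * u := by
      intro p pp hp
      rcases (Nat.Prime.dvd_mul pp).mp (show p ∣ 2 * (2 * u) by
          rwa [show 2 * (2 * u) = 4 * u from by ring]) with h | h
      · exact dvd_mul_of_dvd_left h u
      · exact h
    have hshift := sum_shift c d (4 * u) (2 * u) hq (by omega) H
    have hterm : ∀ z ∈ (Finset.range (4 * u)).filter (fun z => Nat.gcd z (4 * u) = 1),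
        Fz c d (4 * u) (z + 2 * u) = - Fz c d (4 * u) z := by
      intro z hz
      simp only [Finset.mem_filter, Finset.mem_range] at hz
      have h2z : ¬ 2 ∣ z := by
        intro h2
        have h2g : 2 ∣ Nat.gcd z (4 * u) := Nat.dvd_gcd h2 ⟨2 * u, by ring⟩
        rw [hz.2] at h2g
        norm_num at h2g
      have hzo : Odd (z : ℤ) := by
        rw [Int.odd_iff]
        omega
      rw [Fz_add c d (4 * u) hq z (2 * u)]
      have hx : ((c : ℂ) * (3 * (z:ℂ)^2 * ((2*u : ℕ):ℂ) + 3 * (z:ℂ) * ((2*u:ℕ):ℂ)^2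
            + ((2*u:ℕ):ℂ)^3)
          - (d : ℂ) * (2 * (z:ℂ) * ((2*u:ℕ):ℂ) + ((2*u:ℕ):ℂ)^2)) / ((4*u : ℕ):ℂ)
          = ((3 * c * (z:ℤ)^2 : ℤ) : ℂ) / 2
            + ((3*c*z*u + 2*c*(u:ℤ)^2 - d*z - d*u : ℤ) : ℂ) := by
        push_cast
        field_simp
        ring
      rw [hx, e2_add, e2_half, e2_int, mul_one]
      have hK : Odd (3 * c * (z:ℤ)^2) := ((by decide : Odd (3:ℤ)).mul hco).mul hzo.pow
      rw [hK.neg_one_zpow]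
      ring
    have hEE : expE c d (4 * u) = - expE c d (4 * u) := by
      calc expE c d (4 * u)
          = ∑ z ∈ (Finset.range (4 * u)).filter (fun z => Nat.gcd z (4 * u) = 1),
              Fz c d (4 * u) (z + 2 * u) := by rw [expE_eq, hshift]
        _ = ∑ z ∈ (Finset.range (4 * u)).filter (fun z => Nat.gcd z (4 * u) = 1),
              - Fz c d (4 * u) z := Finset.sum_congr rfl hterm
        _ = - expE c d (4 * u) := by rw [Finset.sum_neg_distrib, ← expE_eq]
    have h0 : (2 : ℂ) * expE c d (4 * u) = 0 := by linear_combination hEE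
    exact hE ((mul_eq_zero.mp h0).resolve_left (by norm_num))
  · rintro ⟨v, rfl⟩ hE
    by_contra hd
    have hv : 0 < v := by omega
    have hv' : (v : ℂ) ≠ 0 := Nat.cast_ne_zero.mpr hv.ne'
    have H1 : ∀ p, p.Prime → p ∣ 9 * v → p ∣ 3 * v := by
      intro p pp hp
      rcases (Nat.Prime.dvd_mul pp).mp (show p ∣ 3 * (3 * v) by
          rwa [show 3 * (3 * v) = 9 * v from by ring]) with h | h
      · exact dvd_mul_of_dvd_left h v
      · exact h
    have H2 : ∀ p, p.Prime → p ∣ 9 * v → p ∣ 6 * v := by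
      intro p pp hp
      rcases (Nat.Prime.dvd_mul pp).mp (show p ∣ 3 * (3 * v) by
          rwa [show 3 * (3 * v) = 9 * v from by ring]) with h | h
      · exact dvd_mul_of_dvd_left (h.trans ⟨2, rfl⟩) v
      · exact h.trans ⟨2, by ring⟩
    have hs1 := sum_shift c d (9 * v) (3 * v) hq (by omega) H1
    have hs2 := sum_shift c d (9 * v) (6 * v) hq (by omega) H2
    have hterm : ∀ z ∈ (Finset.range (9 * v)).filter (fun z => Nat.gcd z (9 * v) = 1),
        Fz c d (9 * v) z + Fz c d (9 * v) (z + 3 * v) + Fz c d (9 * v) (z + 6 * v) = 0 := by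
      intro z hz
      simp only [Finset.mem_filter, Finset.mem_range] at hz
      have h3z : ¬ (3 : ℤ) ∣ (z : ℤ) := by
        intro h3
        have h3n : 3 ∣ z := by exact_mod_cast h3
        have h3g : 3 ∣ Nat.gcd z (9 * v) := Nat.dvd_gcd h3n ⟨3 * v, by ring⟩
        rw [hz.2] at h3g
        norm_num at h3g
      set k : ℤ := -(2 * d * z) with hk
      have hknd : ¬ (3 : ℤ) ∣ k := by
        rw [hk]
        intro h3
        rw [Int.dvd_neg] at h3
        rcases Int.prime_three.dvd_mul.mp h3 with h | h
        · rcases Int.prime_three.dvd_mul.mp h with h' | h'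
          · norm_num at h'
          · exact hd h'
        · exact h3z h
      have h1 : Fz c d (9 * v) (z + 3 * v) = Fz c d (9 * v) z * om ^ k := by
        rw [Fz_add c d (9 * v) hq z (3 * v)]
        have hx : ((c : ℂ) * (3 * (z:ℂ)^2 * ((3*v : ℕ):ℂ) + 3 * (z:ℂ) * ((3*v:ℕ):ℂ)^2
              + ((3*v:ℕ):ℂ)^3)
            - (d : ℂ) * (2 * (z:ℂ) * ((3*v:ℕ):ℂ) + ((3*v:ℕ):ℂ)^2)) / ((9*v : ℕ):ℂ)
            = ((k : ℤ) : ℂ) / 3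
              + ((c * ((z:ℤ)^2 + 3*z*v + 3*(v:ℤ)^2) - d*v : ℤ) : ℂ) := by
          rw [hk]
          push_cast
          field_simp
          ring
        rw [hx, e2_add, e2_third, e2_int, mul_one]
      have h2 : Fz c d (9 * v) (z + 6 * v) = Fz c d (9 * v) z * (om ^ k) ^ 2 := by
        rw [Fz_add c d (9 * v) hq z (6 * v)]
        have hx : ((c : ℂ) * (3 * (z:ℂ)^2 * ((6*v : ℕ):ℂ) + 3 * (z:ℂ) * ((6*v:ℕ):ℂ)^2
              + ((6*v:ℕ):ℂ)^3)
            - (d : ℂ) * (2 * (z:ℂ) * ((6*v:ℕ):ℂ) + ((6*v:ℕ):ℂ)^2)) / ((9*v : ℕ):ℂ)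
            = ((2 * k : ℤ) : ℂ) / 3
              + ((c * (2*(z:ℤ)^2 + 12*z*v + 24*(v:ℤ)^2) - 4*d*v : ℤ) : ℂ) := by
          rw [hk]
          push_cast
          field_simp
          ring
        rw [hx, e2_add, e2_third, e2_int, mul_one]
        congr 1
        rw [mul_comm (2:ℤ) k, zpow_mul]
        rfl
      have hom3 : om ^ (3 : ℕ) = 1 := om_prim.pow_eq_one
      have hz3 : (om ^ k) ^ 3 = 1 := by
        rw [← zpow_natCast (om ^ k) 3, ← zpow_mul, mul_comm, zpow_mul, zpow_natCast, hom3,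
          one_zpow]
      have hz1 : om ^ k ≠ 1 := by
        intro h
        have h' := (om_prim.zpow_eq_one_iff_dvd k).mp h
        exact hknd (by exact_mod_cast h')
      have hc3 := cube_sum (om ^ k) hz3 hz1
      rw [h1, h2]
      linear_combination (Fz c d (9 * v) z) * hc3
    have hEE : expE c d (9 * v) + expE c d (9 * v) + expE c d (9 * v) = 0 := by
      rw [expE_eq c d (9 * v)]
      nth_rewrite 2 [hs1]
      nth_rewrite 2 [hs2]
      rw [← Finset.sum_add_distrib, ← Finset.sum_add_distrib]
      exact Finset.sum_eq_zero hterm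
    have h0 : (3 : ℂ) * expE c d (9 * v) = 0 := by linear_combination hEE
    exact hE ((mul_eq_zero.mp h0).resolve_left (by norm_num))
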